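/- arXiv:1504.00134 — 2 statements merged into one kernel-verified Lean document; each statement's English description precedes it below -/
import Mathlib

section
/- Let (C_n)_{n∈ℕ} be finite nonempty linearly ordered sets and for m ≥ n let π_{m,n} : C_m → C_n be monotone surjections forming an inverse system. Then the inverse limit C = {x ∈ ∏ C_n : π_{m,n}(x_m) = x_n} with the coordinatewise-induced order (x ≤ y iff x_n ≤ y_n for all n, equivalently the lexicographic comparison) is a complete linear order. -/
/-- The inverse limit of an inverse system of finite nonempty linearly ordered sets with
monotone surjective bonding maps is a complete linear order (with the coordinatewise
order). -/
theorem stmt_10 (C : ℕ → Type*) [∀ n, Fintype (C n)] [∀ n, Nonempty (C n)]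
    [∀ n, LinearOrder (C n)]
    (π : ∀ m n, n ≤ m → C m → C n)
    (hmono : ∀ m n (h : n ≤ m), Monotone (π m n h))
    (hsurj : ∀ m n (h : n ≤ m), Function.Surjective (π m n h))
    (hid : ∀ n (x : C n), π n n le_rfl x = x)
    (hcomp : ∀ k m n (h1 : n ≤ m) (h2 : m ≤ k) (x : C k),
      π m n h1 (π k m h2 x) = π k n (h1.trans h2) x) :
    ∃ inst : CompleteLinearOrder
        {x : ∀ n, C n // ∀ m n (h : n ≤ m), π m n h (x m) = x n},
      ∀ x y : {x : ∀ n, C n // ∀ m n (h : n ≤ m), π m n h (x m) = x n},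
        (letI := inst; x ≤ y) ↔ ∀ n, x.1 n ≤ y.1 n := by
  classical
  letI : ∀ n, CompleteLinearOrder (C n) := fun n =>
    Fintype.toCompleteLinearOrderOfNonempty (C n)
  set L := {x : ∀ n, C n // ∀ m n (h : n ≤ m), π m n h (x m) = x n} with hL
  -- bottom element
  have bo_mem : ∀ m n (h : n ≤ m), π m n h (⊥ : C m) = (⊥ : C n) := by
    intro m n h
    refine le_antisymm ?_ bot_le
    obtain ⟨b, hb⟩ := hsurj m n h ⊥
    calc π m n h ⊥ ≤ π m n h b := hmono m n h bot_le
    _ = ⊥ := hb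
  -- coordinatewise sup of nonempty sets is compatible
  have supc : ∀ (S : Set L), S.Nonempty → ∀ m n (h : n ≤ m),
      π m n h (sSup ((fun x : L => x.1 m) '' S)) = sSup ((fun x : L => x.1 n) '' S) := by
    intro S hS m n h
    have hfin : ∀ k, ((fun x : L => x.1 k) '' S).Finite := fun k => Set.toFinite _
    have hmem := (hS.image (fun x : L => x.1 m)).csSup_mem (hfin m)
    obtain ⟨x0, hx0, hx0e⟩ := hmem
    refine le_antisymm ?_ ?_
    · rw [← hx0e, x0.2 m n h]
      exact le_sSup ⟨x0, hx0, rfl⟩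
    · apply sSup_le
      rintro c ⟨x, hx, rfl⟩
      exact (le_of_eq (x.2 m n h).symm).trans (hmono m n h (le_sSup ⟨x, hx, rfl⟩))
  letI supSet : SupSet L := ⟨fun S =>
    if hS : S.Nonempty then
      ⟨fun n => sSup ((fun x : L => x.1 n) '' S), fun m n h => supc S hS m n h⟩
    else ⟨fun n => ⊥, bo_mem⟩⟩
  have hlub : ∀ S : Set L, IsLUB S (sSup S) := by
    intro S
    by_cases hS : S.Nonempty
    · constructor
      · intro x hx n
        show x.1 n ≤ _
        simp only [supSet, sSup, dif_pos hS]
        exact le_sSup ⟨x, hx, rfl⟩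
      · intro u hu n
        simp only [supSet, sSup, dif_pos hS]
        apply sSup_le
        rintro c ⟨x, hx, rfl⟩
        exact hu hx n
    · constructor
      · intro x hx; exact absurd ⟨x, hx⟩ hS
      · intro u _ n
        simp only [supSet, sSup, dif_neg hS]
        exact bot_le
  letI cl : CompleteLattice L := completeLatticeOfSup L hlub
  have le_tot : ∀ x y : L, x ≤ y ∨ y ≤ x := by
    intro x y
    by_cases hxy : ∀ n, x.1 n ≤ y.1 n
    · exact Or.inl hxy
    · push_neg at hxy
      obtain ⟨n, hn⟩ := hxy
      right
      intro m
      rcases le_total m n with hmn | hnm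
      · rw [← x.2 n m hmn, ← y.2 n m hmn]
        exact hmono n m hmn hn.le
      · rcases le_total (y.1 m) (x.1 m) with h | h
        · exact h
        · exfalso
          have := hmono m n hnm h
          rw [x.2 m n hnm, y.2 m n hnm] at this
          exact absurd this (not_le_of_gt hn)
  letI lo : LinearOrder L :=
    { (inferInstance : PartialOrder L) with
      le_total := le_tot
      toDecidableLE := Classical.decRel _
      min := fun a b => a ⊓ b
      max := fun a b => a ⊔ b
      min_def := by
        intro a b
        split_ifs with h
        · exact inf_eq_left.mpr h
        · exact inf_eq_right.mpr ((le_tot a b).resolve_left h)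
      max_def := by
        intro a b
        split_ifs with h
        · exact sup_eq_right.mpr h
        · exact sup_eq_left.mpr ((le_tot a b).resolve_left h) }
  letI inst : CompleteLinearOrder L :=
    { cl, lo, LinearOrder.toBiheytingAlgebra L with }
  exact ⟨inst, fun x y => Iff.rfl⟩
end

section
/- Let C = ∏_{i≥1} {0,...,n_i−1} with n_i ≥ 2, lexicographic order, and φ(x) = Σ x_i/(n_1⋯n_i). For any a ≤ b in C which depend only on the first n coordinates (i.e., a, b ∈ C_n := ∏_{i≤n}{0,...,n_i−1} extended by zeros), the cylinder/interval [a, b'] (where b' is the supremum of elements strictly below the successor determined by b) satisfies λ(φ([a,b'])) = |[a,b]_{C_n}| / |C_n|, where λ is Lebesgue measure and |[a,b]_{C_n}| is the number of elements of C_n between a and b in lexicographic order. -/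
open MeasureTheory
open scoped BigOperators
open Filter Topology

namespace Stmt15

noncomputable def Q (n : ℕ → ℕ) (i : ℕ) : ℝ := ∏ j ∈ Finset.range i, (n j : ℝ)

variable {n : ℕ → ℕ}

lemma Q_pos (hn : ∀ i, 2 ≤ n i) (i : ℕ) : 0 < Q n i := by
  apply Finset.prod_pos
  intro j _
  have := hn j
  positivity

lemma Q_succ (i : ℕ) : Q n (i + 1) = Q n i * n i := Finset.prod_range_succ _ _

lemma two_pow_le_Q (hn : ∀ i, 2 ≤ n i) (i : ℕ) : (2 : ℝ) ^ i ≤ Q n i := by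
  have h : (2:ℝ)^i = ∏ _j ∈ Finset.range i, (2:ℝ) := by simp
  rw [h]
  refine Finset.prod_le_prod (fun j _ => by norm_num) ?_
  intro j _
  exact_mod_cast hn j

lemma one_div_Q_le (hn : ∀ i, 2 ≤ n i) (i : ℕ) : 1 / Q n i ≤ (1/2 : ℝ) ^ i := by
  rw [div_pow, one_pow]
  exact div_le_div_of_nonneg_left (by norm_num) (by positivity) (two_pow_le_Q hn i)

lemma tendsto_one_div_Q (hn : ∀ i, 2 ≤ n i) : Tendsto (fun i => 1 / Q n i) atTop (𝓝 0) := by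
  apply squeeze_zero (fun i => le_of_lt (by have := Q_pos hn i; positivity)) (one_div_Q_le hn)
  exact tendsto_pow_atTop_nhds_zero_of_lt_one (by norm_num) (by norm_num)

/-- the summand -/
noncomputable def f (n : ℕ → ℕ) (x : ∀ i, Fin (n i)) (i : ℕ) : ℝ := (x i : ℝ) / Q n (i+1)

lemma f_nonneg (hn : ∀ i, 2 ≤ n i) (x : ∀ i, Fin (n i)) (i : ℕ) : 0 ≤ f n x i := by
  have := Q_pos hn (i+1); unfold f; positivity

lemma f_le (hn : ∀ i, 2 ≤ n i) (x : ∀ i, Fin (n i)) (i : ℕ) :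
    f n x i ≤ ((n i : ℝ) - 1) / Q n (i+1) := by
  unfold f
  gcongr
  · exact le_of_lt (Q_pos hn (i+1))
  · have hx : (x i : ℕ) < n i := (x i).isLt
    have : (x i : ℕ) ≤ n i - 1 := Nat.le_sub_one_of_lt hx
    calc ((x i : ℕ) : ℝ) ≤ ((n i - 1 : ℕ) : ℝ) := by exact_mod_cast this
    _ = (n i : ℝ) - 1 := by
        have := hn i
        push_cast [Nat.cast_sub (by omega : 1 ≤ n i)]
        ring

lemma sub_div_Q (hn : ∀ i, 2 ≤ n i) (i : ℕ) :
    ((n i : ℝ) - 1) / Q n (i+1) = 1 / Q n i - 1 / Q n (i+1) := by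
  have h1 := Q_pos hn i
  have h2 := Q_pos hn (i+1)
  have hni : (0:ℝ) < n i := by have := hn i; positivity
  rw [Q_succ]
  field_simp

lemma summable_f (hn : ∀ i, 2 ≤ n i) (x : ∀ i, Fin (n i)) : Summable (f n x) := by
  have hgeo : Summable (fun i => (1/2:ℝ)^i) :=
    summable_geometric_of_lt_one (by norm_num) (by norm_num)
  refine Summable.of_nonneg_of_le (f_nonneg hn x) (fun i => ?_) hgeo
  calc f n x i ≤ ((n i : ℝ) - 1) / Q n (i+1) := f_le hn x i
  _ ≤ 1 / Q n i := by
        rw [sub_div_Q hn]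
        have h2 := Q_pos hn (i+1)
        have : 0 ≤ 1 / Q n (i+1) := by positivity
        linarith
  _ ≤ (1/2:ℝ)^i := one_div_Q_le hn i

/-- finite telescoping -/
lemma sum_Ico_tele (hn : ∀ i, 2 ≤ n i) (s t : ℕ) (h : s ≤ t) :
    ∑ j ∈ Finset.Ico s t, ((n j : ℝ) - 1) / Q n (j+1) = 1 / Q n s - 1 / Q n t := by
  induction t, h using Nat.le_induction with
  | base => simp
  | succ t ht ih =>
      rw [Finset.sum_Ico_succ_top ht, ih, sub_div_Q hn]
      ring

/-- infinite telescoping -/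
lemma hasSum_tele (hn : ∀ i, 2 ≤ n i) (s : ℕ) :
    HasSum (fun j => ((n (j + s) : ℝ) - 1) / Q n (j + s + 1)) (1 / Q n s) := by
  have hsum : Summable (fun j => ((n (j + s) : ℝ) - 1) / Q n (j + s + 1)) := by
    have hgeo : Summable (fun i : ℕ => (1/2:ℝ)^(i + s)) := by
      exact (summable_geometric_of_lt_one (by norm_num) (by norm_num)).comp_injective
        (add_left_injective s)
    refine Summable.of_nonneg_of_le (fun j => ?_) (fun j => ?_) hgeo
    · have h1 := Q_pos hn (j+s+1)
      have h2 := hn (j+s)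
      have : (1:ℝ) ≤ n (j+s) := by exact_mod_cast by omega
      apply div_nonneg (by linarith) (le_of_lt h1)
    · rw [sub_div_Q hn]
      have h2 := Q_pos hn (j+s+1)
      have h3 : 0 ≤ 1 / Q n (j+s+1) := by positivity
      calc 1 / Q n (j+s) - 1 / Q n (j+s+1) ≤ 1 / Q n (j+s) := by linarith
      _ ≤ (1/2:ℝ)^(j+s) := one_div_Q_le hn (j+s)
  rw [hsum.hasSum_iff_tendsto_nat]
  have key : ∀ m, ∑ j ∈ Finset.range m, ((n (j + s) : ℝ) - 1) / Q n (j + s + 1)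
      = 1 / Q n s - 1 / Q n (s + m) := by
    intro m
    rw [← sum_Ico_tele hn s (s+m) (Nat.le_add_right s m)]
    rw [Finset.sum_Ico_eq_sum_range]
    simp [add_comm s]
  simp_rw [key]
  have := (tendsto_one_div_Q hn).comp (tendsto_add_atTop_nat s |>.comp tendsto_id)
  have h2 : Tendsto (fun m => 1 / Q n (s + m)) atTop (𝓝 0) := by
    simpa [Function.comp_def, add_comm] using this
  simpa using (tendsto_const_nhds (x := 1 / Q n s)).sub h2

lemma tsum_tele (hn : ∀ i, 2 ≤ n i) (s : ℕ) :
    ∑' j, ((n (j + s) : ℝ) - 1) / Q n (j + s + 1) = 1 / Q n s := (hasSum_tele hn s).tsum_eq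

noncomputable def phi (n : ℕ → ℕ) (x : ∀ i, Fin (n i)) : ℝ := ∑' i, f n x i

lemma phi_split (hn : ∀ i, 2 ≤ n i) (x : ∀ i, Fin (n i)) (m : ℕ) :
    phi n x = ∑ i ∈ Finset.range m, f n x i + ∑' j, f n x (j + m) :=
  ((summable_f hn x).sum_add_tsum_nat_add m).symm

lemma tail_nonneg (hn : ∀ i, 2 ≤ n i) (x : ∀ i, Fin (n i)) (m : ℕ) :
    0 ≤ ∑' j, f n x (j + m) :=
  tsum_nonneg (fun j => f_nonneg hn x (j + m))

lemma tail_le (hn : ∀ i, 2 ≤ n i) (x : ∀ i, Fin (n i)) (m : ℕ) :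
    ∑' j, f n x (j + m) ≤ 1 / Q n m := by
  rw [← tsum_tele hn m]
  refine Summable.tsum_le_tsum (fun j => f_le hn x (j+m)) ((summable_f hn x).comp_injective
    (add_left_injective m)) (hasSum_tele hn m).summable

lemma phi_nonneg (hn : ∀ i, 2 ≤ n i) (x : ∀ i, Fin (n i)) : 0 ≤ phi n x :=
  tsum_nonneg (f_nonneg hn x)

lemma phi_le_one (hn : ∀ i, 2 ≤ n i) (x : ∀ i, Fin (n i)) : phi n x ≤ 1 := by
  have := tail_le hn x 0
  simpa [phi, Q] using this

lemma phi_supported (hn : ∀ i, 2 ≤ n i) {N : ℕ} {x : ∀ i, Fin (n i)}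
    (hx : ∀ i, N ≤ i → (x i : ℕ) = 0) :
    phi n x = ∑ i ∈ Finset.range N, f n x i := by
  rw [phi_split hn x N]
  have : ∀ j : ℕ, f n x (j + N) = 0 := by
    intro j
    have h0 : (x (j + N) : ℕ) = 0 := hx _ (Nat.le_add_left N j)
    simp [f, h0]
  simp [this]

/-- monotonicity of phi under lex -/
lemma phi_mono (hn : ∀ i, 2 ≤ n i) {x y : ∀ i, Fin (n i)}
    (h : Pi.Lex (· < ·) (fun {_} => (· < ·)) x y) : phi n x ≤ phi n y := by
  obtain ⟨i, hlt, hi⟩ := h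
  have hxi : (x i : ℕ) < y i := hi
  have hxi' : ((x i : ℕ) : ℝ) + 1 ≤ ((y i : ℕ) : ℝ) := by exact_mod_cast hxi
  have hQ := Q_pos hn (i+1)
  have hsum_eq : ∀ j ∈ Finset.range i, f n x j = f n y j := by
    intro j hj
    have := hlt j (Finset.mem_range.1 hj)
    simp [f, this]
  calc phi n x = ∑ j ∈ Finset.range (i+1), f n x j + ∑' j, f n x (j + (i+1)) :=
        phi_split hn x (i+1)
  _ ≤ ∑ j ∈ Finset.range (i+1), f n x j + 1 / Q n (i+1) := by
        linarith [tail_le hn x (i+1)]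
  _ = ∑ j ∈ Finset.range i, f n x j + (x i : ℝ) / Q n (i+1) + 1 / Q n (i+1) := by
        rw [Finset.sum_range_succ]; rfl
  _ ≤ ∑ j ∈ Finset.range i, f n y j + (y i : ℝ) / Q n (i+1) := by
        rw [Finset.sum_congr rfl hsum_eq]
        have : (x i : ℝ) / Q n (i+1) + 1 / Q n (i+1) ≤ (y i : ℝ) / Q n (i+1) := by
          rw [← add_div]
          gcongr
        linarith
  _ = ∑ j ∈ Finset.range (i+1), f n y j := by rw [Finset.sum_range_succ]; rfl
  _ ≤ phi n y := by
        rw [phi_split hn y (i+1)]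
        linarith [tail_nonneg hn y (i+1)]

/-- strict monotonicity on supported elements, with gap 1 / Q n N -/
lemma phi_strict (hn : ∀ i, 2 ≤ n i) {N : ℕ} {x y : ∀ i, Fin (n i)}
    (hx : ∀ i, N ≤ i → (x i : ℕ) = 0) (hy : ∀ i, N ≤ i → (y i : ℕ) = 0)
    (h : Pi.Lex (· < ·) (fun {_} => (· < ·)) x y) :
    phi n x + 1 / Q n N ≤ phi n y := by
  obtain ⟨i, hlt, hi⟩ := h
  have hxi : (x i : ℕ) < y i := hi
  have hiN : i < N := by
    by_contra hge
    push_neg at hge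
    rw [hx i hge, hy i hge] at hxi
    omega
  have hxi' : ((x i : ℕ) : ℝ) + 1 ≤ ((y i : ℕ) : ℝ) := by exact_mod_cast hxi
  have hQ := Q_pos hn (i+1)
  have hQN := Q_pos hn N
  have hsum_eq : ∀ j ∈ Finset.range i, f n x j = f n y j := by
    intro j hj
    have := hlt j (Finset.mem_range.1 hj)
    simp [f, this]
  have hsplitx : ∑ j ∈ Finset.range N, f n x j
      = ∑ j ∈ Finset.range (i+1), f n x j + ∑ j ∈ Finset.Ico (i+1) N, f n x j := by
    rw [Finset.range_eq_Ico, ← Finset.sum_Ico_consecutive _ (Nat.zero_le _) hiN]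
    simp only [Finset.range_eq_Ico, Nat.succ_eq_add_one]
  have htail : ∑ j ∈ Finset.Ico (i+1) N, f n x j ≤ 1 / Q n (i+1) - 1 / Q n N := by
    rw [← sum_Ico_tele hn (i+1) N hiN]
    exact Finset.sum_le_sum (fun j _ => f_le hn x j)
  calc phi n x + 1 / Q n N = ∑ j ∈ Finset.range N, f n x j + 1 / Q n N :=
        by rw [phi_supported hn hx]
  _ ≤ ∑ j ∈ Finset.range (i+1), f n x j + 1 / Q n (i+1) := by
        rw [hsplitx]; linarith
  _ = ∑ j ∈ Finset.range i, f n x j + (x i : ℝ) / Q n (i+1) + 1 / Q n (i+1) := by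
        rw [Finset.sum_range_succ]; rfl
  _ ≤ ∑ j ∈ Finset.range i, f n y j + (y i : ℝ) / Q n (i+1) := by
        rw [Finset.sum_congr rfl hsum_eq]
        have : (x i : ℝ) / Q n (i+1) + 1 / Q n (i+1) ≤ (y i : ℝ) / Q n (i+1) := by
          rw [← add_div]
          gcongr
        linarith
  _ = ∑ j ∈ Finset.range (i+1), f n y j := by rw [Finset.sum_range_succ]; rfl
  _ ≤ phi n y := by
        rw [phi_split hn y (i+1)]
        linarith [tail_nonneg hn y (i+1)]

noncomputable def dig (n : ℕ → ℕ) (hn : ∀ i, 2 ≤ n i) (y : ℝ) : ∀ i, Fin (n i) :=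
  fun i => ⟨⌊y * Q n (i+1)⌋₊ % n i, Nat.mod_lt _ (by have := hn i; omega)⟩

lemma floor_div_step (hn : ∀ i, 2 ≤ n i) (y : ℝ) (i : ℕ) :
    ⌊y * Q n i⌋₊ = ⌊y * Q n (i+1)⌋₊ / n i := by
  rw [← Nat.floor_div_natCast]
  congr 1
  rw [Q_succ]
  have hni : (0:ℝ) < n i := by have := hn i; positivity
  field_simp

lemma dig_partial (hn : ∀ i, 2 ≤ n i) {y : ℝ} (hy0 : 0 ≤ y) (hy1 : y < 1) (m : ℕ) :
    ∑ j ∈ Finset.range m, f n (dig n hn y) j = (⌊y * Q n m⌋₊ : ℝ) / Q n m := by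
  induction m with
  | zero => simp [Q, Nat.floor_eq_zero.2 hy1]
  | succ m ih =>
      rw [Finset.sum_range_succ, ih]
      have hQm := Q_pos hn m
      have hQm1 := Q_pos hn (m+1)
      have hni : (0:ℝ) < n m := by have := hn m; positivity
      have hdm : ((dig n hn y m : ℕ) : ℝ) = (⌊y * Q n (m+1)⌋₊ % n m : ℕ) := by rfl
      have hdiv := Nat.div_add_mod (⌊y * Q n (m+1)⌋₊) (n m)
      have hfl := floor_div_step hn y m
      have hcast : (⌊y * Q n (m+1)⌋₊ : ℝ)
          = (n m : ℝ) * (⌊y * Q n m⌋₊ : ℝ) + ((⌊y * Q n (m+1)⌋₊ % n m : ℕ) : ℝ) := by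
        rw [hfl]
        exact_mod_cast (hdiv.symm)
      show (⌊y * Q n m⌋₊ : ℝ) / Q n m + ((dig n hn y m : ℕ) : ℝ) / Q n (m+1)
          = (⌊y * Q n (m+1)⌋₊ : ℝ) / Q n (m+1)
      rw [hdm, hcast, Q_succ]
      field_simp

lemma phi_dig (hn : ∀ i, 2 ≤ n i) {y : ℝ} (hy0 : 0 ≤ y) (hy1 : y < 1) :
    phi n (dig n hn y) = y := by
  have hsum := summable_f hn (dig n hn y)
  have htendsto : Tendsto (fun m => ∑ j ∈ Finset.range m, f n (dig n hn y) j) atTop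
      (𝓝 (phi n (dig n hn y))) := hsum.hasSum.tendsto_sum_nat
  have htendsto' : Tendsto (fun m => ∑ j ∈ Finset.range m, f n (dig n hn y) j) atTop (𝓝 y) := by
    simp_rw [dig_partial hn hy0 hy1]
    have hbound : ∀ m, |(⌊y * Q n m⌋₊ : ℝ) / Q n m - y| ≤ 1 / Q n m := by
      intro m
      have hQ := Q_pos hn m
      have h1 : (⌊y * Q n m⌋₊ : ℝ) ≤ y * Q n m := Nat.floor_le (by positivity)
      have h2 : y * Q n m < (⌊y * Q n m⌋₊ : ℝ) + 1 := Nat.lt_floor_add_one _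
      have ha : (⌊y * Q n m⌋₊ : ℝ) / Q n m ≤ y := by rw [div_le_iff₀ hQ]; exact h1
      have hb : y ≤ (⌊y * Q n m⌋₊ : ℝ) / Q n m + 1 / Q n m := by
        rw [← add_div, le_div_iff₀ hQ]; nlinarith
      have hc : (0:ℝ) < 1 / Q n m := by positivity
      rw [abs_le]
      constructor <;> linarith
    have : Tendsto (fun m => (⌊y * Q n m⌋₊ : ℝ) / Q n m - y) atTop (𝓝 0) := by
      apply squeeze_zero_norm hbound (tendsto_one_div_Q hn)
    have := this.add_const y
    simpa using this
  exact tendsto_nhds_unique htendsto htendsto'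

def vnat (n : ℕ → ℕ) (N : ℕ) (x : ∀ i, Fin (n i)) : ℕ :=
  ∑ i ∈ Finset.range N, (x i : ℕ) * ∏ j ∈ Finset.Ico (i+1) N, n j

lemma Q_cast (N : ℕ) : Q n N = ((∏ j ∈ Finset.range N, n j : ℕ) : ℝ) := by
  rw [Q, Nat.cast_prod]

lemma phi_eq_vnat (hn : ∀ i, 2 ≤ n i) {N : ℕ} {x : ∀ i, Fin (n i)}
    (hx : ∀ i, N ≤ i → (x i : ℕ) = 0) :
    phi n x = (vnat n N x : ℝ) / Q n N := by
  rw [phi_supported hn hx, vnat, Nat.cast_sum, Finset.sum_div]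
  refine Finset.sum_congr rfl (fun i hi => ?_)
  have hi' : i + 1 ≤ N := Finset.mem_range.1 hi
  have hQeq : Q n (i+1) * ∏ j ∈ Finset.Ico (i+1) N, (n j : ℝ) = Q n N :=
    Finset.prod_range_mul_prod_Ico _ hi'
  have hQ1 := Q_pos hn (i+1)
  have hQN := Q_pos hn N
  have hprodpos : (0:ℝ) < ∏ j ∈ Finset.Ico (i+1) N, (n j : ℝ) := by
    refine Finset.prod_pos (fun j _ => ?_)
    have := hn j; positivity
  rw [f]
  push_cast
  rw [← hQeq]
  field_simp

lemma phi_supported_le (hn : ∀ i, 2 ≤ n i) {N : ℕ} {x : ∀ i, Fin (n i)}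
    (hx : ∀ i, N ≤ i → (x i : ℕ) = 0) :
    phi n x ≤ 1 - 1 / Q n N := by
  rw [phi_supported hn hx]
  calc ∑ i ∈ Finset.range N, f n x i ≤ ∑ i ∈ Finset.range N, ((n i : ℝ) - 1) / Q n (i+1) :=
        Finset.sum_le_sum (fun i _ => f_le hn x i)
  _ = 1 - 1 / Q n N := by
      rw [Finset.range_eq_Ico, sum_Ico_tele hn 0 N (Nat.zero_le N)]
      simp [Q]

lemma vnat_lt_prod (hn : ∀ i, 2 ≤ n i) {N : ℕ} {x : ∀ i, Fin (n i)}
    (hx : ∀ i, N ≤ i → (x i : ℕ) = 0) :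
    vnat n N x < ∏ j ∈ Finset.range N, n j := by
  have h1 := phi_supported_le hn hx
  rw [phi_eq_vnat hn hx] at h1
  have hQN := Q_pos hn N
  have h2 : (vnat n N x : ℝ) ≤ Q n N - 1 := by
    rw [div_le_iff₀ hQN] at h1
    have : (1 - 1 / Q n N) * Q n N = Q n N - 1 := by field_simp
    linarith [this ▸ h1]
  have h3 : (vnat n N x : ℝ) < Q n N := by linarith
  rw [Q_cast] at h3
  exact_mod_cast h3

lemma lex_trichot (x y : ∀ i, Fin (n i)) :
    Pi.Lex (· < ·) (fun {_} => (· < ·)) x y ∨ x = y ∨ Pi.Lex (· < ·) (fun {_} => (· < ·)) y x :=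
  by
  have H := (Pi.trichotomous_lex (r := (· < ·)) (s := fun {_} => (· < ·)) wellFounded_lt).trichotomous x y
  tauto

lemma lex_trans {x y z : ∀ i, Fin (n i)}
    (h1 : Pi.Lex (· < ·) (fun {_} => (· < ·)) x y)
    (h2 : Pi.Lex (· < ·) (fun {_} => (· < ·)) y z) :
    Pi.Lex (· < ·) (fun {_} => (· < ·)) x z := by
  obtain ⟨i, hi, hxi⟩ := h1
  obtain ⟨j, hj, hyj⟩ := h2
  rcases lt_trichotomy i j with H | rfl | H
  · exact ⟨i, fun k hk => (hi k hk).trans (hj k (hk.trans H)), (hj i H) ▸ hxi⟩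
  · exact ⟨i, fun k hk => (hi k hk).trans (hj k hk), hxi.trans hyj⟩
  · exact ⟨j, fun k hk => (hi k (hk.trans H)).trans (hj k hk), (hi j H).symm ▸ hyj⟩

lemma vnat_strict (hn : ∀ i, 2 ≤ n i) {N : ℕ} {x y : ∀ i, Fin (n i)}
    (hx : ∀ i, N ≤ i → (x i : ℕ) = 0) (hy : ∀ i, N ≤ i → (y i : ℕ) = 0)
    (h : Pi.Lex (· < ·) (fun {_} => (· < ·)) x y) :
    vnat n N x < vnat n N y := by
  have hstrict := phi_strict hn hx hy h
  rw [phi_eq_vnat hn hx, phi_eq_vnat hn hy] at hstrict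
  have hQN := Q_pos hn N
  have : (vnat n N x : ℝ) + 1 ≤ (vnat n N y : ℝ) := by
    rw [← add_div, div_le_div_iff₀ hQN hQN] at hstrict
    have h2 := le_of_mul_le_mul_right hstrict hQN
    linarith
  exact_mod_cast this

lemma vnat_mono (hn : ∀ i, 2 ≤ n i) {N : ℕ} {x y : ∀ i, Fin (n i)}
    (hx : ∀ i, N ≤ i → (x i : ℕ) = 0) (hy : ∀ i, N ≤ i → (y i : ℕ) = 0)
    (h : x = y ∨ Pi.Lex (· < ·) (fun {_} => (· < ·)) x y) :
    vnat n N x ≤ vnat n N y := by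
  rcases h with rfl | h
  · exact le_rfl
  · exact (vnat_strict hn hx hy h).le

lemma vnat_inj (hn : ∀ i, 2 ≤ n i) {N : ℕ} {x y : ∀ i, Fin (n i)}
    (hx : ∀ i, N ≤ i → (x i : ℕ) = 0) (hy : ∀ i, N ≤ i → (y i : ℕ) = 0)
    (h : vnat n N x = vnat n N y) : x = y := by
  rcases lex_trichot x y with H | H | H
  · exact absurd h (Nat.ne_of_lt (vnat_strict hn hx hy H))
  · exact H
  · exact absurd h.symm (Nat.ne_of_lt (vnat_strict hn hy hx H))

lemma dig_rat_supported (hn : ∀ i, 2 ≤ n i) {N k : ℕ}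
    (hk : k < ∏ j ∈ Finset.range N, n j) :
    ∀ i, N ≤ i → ((dig n hn ((k : ℝ) / Q n N) i : ℕ) = 0) := by
  intro i hi
  have hQN := Q_pos hn N
  have key : (k : ℝ) / Q n N * Q n (i+1) = ((k * ∏ j ∈ Finset.Ico N (i+1), n j : ℕ) : ℝ) := by
    have hQeq : Q n N * ∏ j ∈ Finset.Ico N (i+1), (n j : ℝ) = Q n (i+1) :=
      Finset.prod_range_mul_prod_Ico _ (by omega)
    push_cast
    rw [← hQeq]
    field_simp
  show ⌊(k : ℝ) / Q n N * Q n (i+1)⌋₊ % n i = 0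
  rw [key, Nat.floor_natCast]
  have hdvd : n i ∣ k * ∏ j ∈ Finset.Ico N (i+1), n j := by
    refine Dvd.dvd.mul_left ?_ k
    exact Finset.dvd_prod_of_mem _ (Finset.mem_Ico.2 ⟨hi, by omega⟩)
  exact Nat.mod_eq_zero_of_dvd hdvd

lemma vnat_dig (hn : ∀ i, 2 ≤ n i) {N k : ℕ}
    (hk : k < ∏ j ∈ Finset.range N, n j) :
    vnat n N (dig n hn ((k : ℝ) / Q n N)) = k := by
  have hQN := Q_pos hn N
  have hy0 : (0:ℝ) ≤ (k : ℝ) / Q n N := by positivity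
  have hy1 : (k : ℝ) / Q n N < 1 := by
    rw [div_lt_one hQN, Q_cast]
    exact_mod_cast hk
  have h1 := phi_dig hn hy0 hy1
  have h2 := phi_eq_vnat hn (dig_rat_supported hn hk)
  rw [h1] at h2
  field_simp at h2
  exact_mod_cast h2.symm

lemma card_interval (hn : ∀ i, 2 ≤ n i) {N : ℕ} {a b : ∀ i, Fin (n i)}
    (ha : ∀ i, N ≤ i → (a i : ℕ) = 0) (hb : ∀ i, N ≤ i → (b i : ℕ) = 0) :
    Nat.card {x : ∀ i, Fin (n i) // (∀ i, N ≤ i → (x i : ℕ) = 0) ∧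
        (a = x ∨ Pi.Lex (· < ·) (fun {_} => (· < ·)) a x) ∧
        (x = b ∨ Pi.Lex (· < ·) (fun {_} => (· < ·)) x b)} =
      (Finset.Icc (vnat n N a) (vnat n N b)).card := by
  rw [← Nat.card_eq_finsetCard]
  have hmem : ∀ x : {x : ∀ i, Fin (n i) // (∀ i, N ≤ i → (x i : ℕ) = 0) ∧
        (a = x ∨ Pi.Lex (· < ·) (fun {_} => (· < ·)) a x) ∧
        (x = b ∨ Pi.Lex (· < ·) (fun {_} => (· < ·)) x b)},
      vnat n N x.1 ∈ Finset.Icc (vnat n N a) (vnat n N b) := by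
    rintro ⟨x, hx, h1, h2⟩
    refine Finset.mem_Icc.2 ⟨?_, ?_⟩
    · refine vnat_mono hn ha hx ?_
      rcases h1 with h | h
      · exact Or.inl h
      · exact Or.inr h
    · refine vnat_mono hn hx hb ?_
      rcases h2 with h | h
      · exact Or.inl h
      · exact Or.inr h
  refine Nat.card_eq_of_bijective (fun x => ⟨vnat n N x.1, hmem x⟩) ⟨?_, ?_⟩
  · rintro ⟨x, hx, hx1, hx2⟩ ⟨y, hy, hy1, hy2⟩ hxy
    have : vnat n N x = vnat n N y := congrArg Subtype.val hxy
    exact Subtype.ext (vnat_inj hn hx hy this)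
  · rintro ⟨k, hk⟩
    rw [Finset.mem_Icc] at hk
    have hbP := vnat_lt_prod hn hb
    have hkP : k < ∏ j ∈ Finset.range N, n j := lt_of_le_of_lt hk.2 hbP
    set x := dig n hn ((k : ℝ) / Q n N) with hxdef
    have hxs : ∀ i, N ≤ i → (x i : ℕ) = 0 := dig_rat_supported hn hkP
    have hvx : vnat n N x = k := vnat_dig hn hkP
    have hax : a = x ∨ Pi.Lex (· < ·) (fun {_} => (· < ·)) a x := by
      rcases lex_trichot a x with H | H | H
      · exact Or.inr H
      · exact Or.inl H
      · exfalso
        have := vnat_strict hn hxs ha H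
        omega
    have hxb : x = b ∨ Pi.Lex (· < ·) (fun {_} => (· < ·)) x b := by
      rcases lex_trichot x b with H | H | H
      · exact Or.inr H
      · exact Or.inl H
      · exfalso
        have := vnat_strict hn hb hxs H
        omega
    exact ⟨⟨x, hxs, hax, hxb⟩, Subtype.ext hvx⟩

end Stmt15

open Stmt15 in

/-- For `a ≤ b` in `C = ∏ i, Fin (n i)` depending only on the first `N` coordinates
(extended by zeros), the image under `φ` of the lexicographic interval `[a, b']` (where
`b'` agrees with `b` on the first `N` coordinates and is maximal afterwards) has Lebesgue
measure `|[a,b]_{C_N}| / |C_N|`. -/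
theorem stmt_15 (n : ℕ → ℕ) (hn : ∀ i, 2 ≤ n i) (N : ℕ)
    (φ : (∀ i, Fin (n i)) → ℝ)
    (hφ : ∀ x, φ x = ∑' i : ℕ, (x i : ℝ) / ∏ j ∈ Finset.range (i + 1), (n j : ℝ))
    (a b b' : ∀ i, Fin (n i))
    (ha : ∀ i, N ≤ i → (a i : ℕ) = 0)
    (hb : ∀ i, N ≤ i → (b i : ℕ) = 0)
    (hab : a = b ∨ Pi.Lex (· < ·) (fun {_} => (· < ·)) a b)
    (hb'lt : ∀ i, i < N → b' i = b i)
    (hb'ge : ∀ i, N ≤ i → (b' i : ℕ) = n i - 1) :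
    volume (φ '' {x | (a = x ∨ Pi.Lex (· < ·) (fun {_} => (· < ·)) a x) ∧
        (x = b' ∨ Pi.Lex (· < ·) (fun {_} => (· < ·)) x b')}) =
      (Nat.card {x : ∀ i, Fin (n i) // (∀ i, N ≤ i → (x i : ℕ) = 0) ∧
          (a = x ∨ Pi.Lex (· < ·) (fun {_} => (· < ·)) a x) ∧
          (x = b ∨ Pi.Lex (· < ·) (fun {_} => (· < ·)) x b)} : ENNReal) /
        ∏ i ∈ Finset.range N, (n i : ENNReal) := by
  have hphi : ∀ x, φ x = phi n x := fun x => by rw [hφ]; rfl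
  have hbb' : Pi.Lex (· < ·) (fun {_} => (· < ·)) b b' := by
    refine ⟨N, fun j hj => (hb'lt j hj).symm, ?_⟩
    have h1 : (b N : ℕ) = 0 := hb N le_rfl
    have h2 : (b' N : ℕ) = n N - 1 := hb'ge N le_rfl
    have h3 := hn N
    exact Fin.lt_def.2 (by omega)
  have hab' : a = b' ∨ Pi.Lex (· < ·) (fun {_} => (· < ·)) a b' := by
    rcases hab with rfl | h
    · exact Or.inr hbb'
    · exact Or.inr (lex_trans h hbb')
  have himg : φ '' {x | (a = x ∨ Pi.Lex (· < ·) (fun {_} => (· < ·)) a x) ∧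
        (x = b' ∨ Pi.Lex (· < ·) (fun {_} => (· < ·)) x b')} = Set.Icc (φ a) (φ b') := by
    apply Set.Subset.antisymm
    · rintro _ ⟨x, ⟨h1, h2⟩, rfl⟩
      constructor
      · rcases h1 with rfl | h
        · exact le_rfl
        · rw [hphi, hphi]; exact phi_mono hn h
      · rcases h2 with rfl | h
        · exact le_rfl
        · rw [hphi, hphi]; exact phi_mono hn h
    · rintro y ⟨hy1, hy2⟩
      rcases eq_or_lt_of_le hy2 with heq | hlt
      · exact ⟨b', ⟨hab', Or.inl rfl⟩, heq.symm⟩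
      · have hy0 : 0 ≤ y := le_trans (by rw [hphi]; exact phi_nonneg hn a) hy1
        have hylt1 : y < 1 := lt_of_lt_of_le hlt (by rw [hphi]; exact phi_le_one hn b')
        set x := dig n hn y with hxdef
        have hx : φ x = y := by rw [hphi]; exact phi_dig hn hy0 hylt1
        have hxb' : x = b' ∨ Pi.Lex (· < ·) (fun {_} => (· < ·)) x b' := by
          rcases lex_trichot x b' with H | H | H
          · exact Or.inr H
          · exact Or.inl H
          · exfalso
            have := phi_mono hn H
            rw [← hphi, ← hphi, hx] at this
            exact absurd hlt (not_lt.2 this)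
        rcases lex_trichot a x with H | H | H
        · exact ⟨x, ⟨Or.inr H, hxb'⟩, hx⟩
        · exact ⟨x, ⟨Or.inl H, hxb'⟩, hx⟩
        · have hmono := phi_mono hn H
          rw [← hphi, ← hphi, hx] at hmono
          have hay : φ a = y := le_antisymm hy1 hmono
          exact ⟨a, ⟨Or.inl rfl, hab'⟩, hay⟩
  rw [himg]
  have hQN := Q_pos hn N
  have hb'val : φ b' = (vnat n N b : ℝ) / Q n N + 1 / Q n N := by
    rw [hphi, phi_split hn b' N]
    have hsum : ∑ i ∈ Finset.range N, f n b' i = ∑ i ∈ Finset.range N, f n b i :=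
      Finset.sum_congr rfl (fun i hi => by rw [f, f, hb'lt i (Finset.mem_range.1 hi)])
    have htail : ∑' j, f n b' (j + N) = 1 / Q n N := by
      rw [← tsum_tele hn N]
      refine tsum_congr (fun j => ?_)
      rw [f]
      congr 1
      have h1 : (b' (j + N) : ℕ) = n (j + N) - 1 := hb'ge _ (Nat.le_add_left N j)
      have h2 := hn (j + N)
      rw [h1]
      push_cast [Nat.cast_sub (by omega : 1 ≤ n (j + N))]
      ring
    rw [hsum, htail, ← phi_supported hn hb, phi_eq_vnat hn hb]
  have haval : φ a = (vnat n N a : ℝ) / Q n N := by rw [hphi]; exact phi_eq_vnat hn ha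
  rw [Real.volume_Icc, hb'val, haval, card_interval hn ha hb, Nat.card_Icc]
  have hva : vnat n N a ≤ vnat n N b := vnat_mono hn ha hb hab
  have harith : (vnat n N b : ℝ) / Q n N + 1 / Q n N - (vnat n N a : ℝ) / Q n N
      = ((vnat n N b + 1 - vnat n N a : ℕ) : ℝ) / Q n N := by
    push_cast [Nat.cast_sub (by omega : vnat n N a ≤ vnat n N b + 1)]
    ring
  rw [harith, Q_cast]
  have hP : (0:ℝ) < ((∏ j ∈ Finset.range N, n j : ℕ) : ℝ) := by rw [← Q_cast]; exact hQN
  rw [ENNReal.ofReal_div_of_pos hP, ENNReal.ofReal_natCast, ENNReal.ofReal_natCast]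
  congr 1
  rw [← Nat.cast_prod]
end
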